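/- (Finitary Completeness) Let M be a closed term of Λ⊕^cbv. For every k ∈ ℕ there exists a tight typing derivation Π ⊳ ⊢_w M : 𝔞 such that ‖𝔞‖ = eval_k(M) and w ≥ etime_k(M). -/

import Mathlib

open scoped ENNReal

namespace CbV

/-! ### Terms of the probabilistic call-by-value λ-calculus `Λ⊕^cbv` -/

mutual
inductive Val : Type
  | var : ℕ → Val
  | lam : ℕ → Tm → Val
inductive Tm : Type
  | val : Val → Tm
  | app : Val → Val → Tm
  | choice : Tm → Tm → Tm
  | letin : ℕ → Tm → Tm → Tm
end

-- Substitution of a value for a variable.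
mutual
def substV : Val → ℕ → Val → Val
  | .var y, x, V => if y = x then V else .var y
  | .lam y M, x, V => if y = x then .lam y M else .lam y (substT M x V)
def substT : Tm → ℕ → Val → Tm
  | .val W, x, V => .val (substV W x V)
  | .app W U, x, V => .app (substV W x V) (substV U x V)
  | .choice M N, x, V => .choice (substT M x V) (substT N x V)
  | .letin y N M, x, V => .letin y (substT N x V) (if y = x then M else substT M x V)
end

mutual
def fvV : Val → Finset ℕ
  | .var x => {x}
  | .lam x M => fvT M \ {x}
def fvT : Tm → Finset ℕ
  | .val V => fvV V
  | .app V W => fvV V ∪ fvV W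
  | .choice M N => fvT M ∪ fvT N
  | .letin x N M => fvT N ∪ (fvT M \ {x})
end

def Tm.Closed (M : Tm) : Prop := fvT M = ∅
def Val.Closed (V : Val) : Prop := fvV V = ∅

def Tm.isVal : Tm → Bool
  | .val _ => true
  | _ => false

/-! ### Multidistributions and the operational semantics -/

/-- Multidistributions over terms, represented as finite multisets of scaled terms. -/
abbrev MDist := Multiset (ℚ × Tm)

def scaleM (q : ℚ) (m : MDist) : MDist := m.map fun p => (q * p.1, p.2)

/-- One-step reduction from terms to multidistributions. -/
inductive Step : Tm → MDist → Prop
  | beta (x : ℕ) (M : Tm) (V : Val) :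
      Step (.app (.lam x M) V) {(1, substT M x V)}
  | letval (x : ℕ) (V : Val) (M : Tm) :
      Step (.letin x (.val V) M) {(1, substT M x V)}
  | choice (M N : Tm) : Step (.choice M N) {(1/2, M), (1/2, N)}
  | letstep {N : Tm} {m : MDist} (x : ℕ) (M : Tm) :
      Step N m → Step (.letin x N M) (m.map fun p => (p.1, Tm.letin x p.2 M))

/-- Lifting of one-step reduction to multidistributions. -/
inductive Lift : MDist → MDist → Prop
  | value (V : Val) : Lift {(1, Tm.val V)} {(1, Tm.val V)}
  | single {M : Tm} {m : MDist} : Step M m → Lift {(1, M)} m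
  | multi (s : Multiset (ℚ × Tm × MDist)) :
      (∀ x ∈ s, Lift {(1, x.2.1)} x.2.2) →
      Lift (s.map fun x => (x.1, x.2.1)) ((s.map fun x => scaleM x.1 x.2.2).sum)

/-- Functional presentation of one-step reduction (values, and stuck open
terms, are kept unchanged); it agrees with `Step` on closed non-value terms. -/
def stepF : Tm → MDist
  | .val V => {(1, .val V)}
  | .app (.lam x M) W => {(1, substT M x W)}
  | .app (.var y) W => {(1, .app (.var y) W)}
  | .choice M N => {(1/2, M), (1/2, N)}
  | .letin x (.val V) M => {(1, substT M x V)}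
  | .letin x N M => (stepF N).map fun p => (p.1, Tm.letin x p.2 M)

def mstepF (m : MDist) : MDist := (m.map fun p => scaleM p.1 (stepF p.2)).sum

/-- The unique reduction sequence `[M] = 𝔪₀ ⇛ 𝔪₁ ⇛ …` of a closed term. -/
def traj (M : Tm) (k : ℕ) : MDist := mstepF^[k] {(1, M)}

/-- `‖𝔪‖𝒱`: the probability that `𝔪` is a value. -/
def normV (m : MDist) : ℚ := ((m.filter fun p => p.2.isVal = true).map Prod.fst).sum

/-- `eval_k(M)`: the probability that `M` terminates within `k` steps. -/
def evalP (k : ℕ) (M : Tm) : ℚ := normV (traj M k)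

/-- `ProbTerm(M) = sup_k eval_k(M)`. -/
noncomputable def ProbTerm (M : Tm) : ℝ := ⨆ k : ℕ, ((evalP k M : ℚ) : ℝ)

/-- `etime_n(M) = Σ_{k<n} (1 - eval_k(M))`. -/
def etime (n : ℕ) (M : Tm) : ℚ := ∑ k ∈ Finset.range n, (1 - evalP k M)

/-- `ETime(M) = Σ_{k≥0} (1 - eval_k(M)) ∈ [0,∞]`, the expected runtime. -/
noncomputable def ETime (M : Tm) : ℝ≥0∞ :=
  ∑' k : ℕ, ENNReal.ofReal ((1 : ℝ) - ((evalP k M : ℚ) : ℝ))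

/-! ### Non-idempotent monadic intersection types -/

/-- Arrow types `𝖠 ::= 𝒜 → 𝔞`, where `𝒜` is an intersection type
(a finite multiset of scaled arrow types, represented as a list) and `𝔞`
is a type distribution (a multidistribution of intersection types,
represented as a list). -/
inductive ATy : Type
  | arr : List (ℚ × ATy) → List (ℚ × List (ℚ × ATy)) → ATy

/-- Intersection types. -/
abbrev ITy := List (ℚ × ATy)
/-- Type distributions. -/
abbrev DTy := List (ℚ × ITy)

/-- A type of any of the three kinds. -/
inductive Ty : Type
  | arrow : ATy → Ty
  | inter : ITy → Ty
  | dist : DTy → Ty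

/-- Typing contexts. -/
abbrev Ctx := ℕ → ITy

def emptyCtx : Ctx := fun _ => []

def scaleL {α : Type} (q : ℚ) (l : List (ℚ × α)) : List (ℚ × α) :=
  l.map fun p => (q * p.1, p.2)

def ctxUnion (Γ Δ : Ctx) : Ctx := fun x => Γ x ++ Δ x

/-- A type distribution is tight if every intersection type in it is empty. -/
def Tight (a : DTy) : Prop := ∀ p ∈ a, p.2 = ([] : ITy)

/-- `‖𝔞‖`: the sum of the probabilities occurring in a type distribution. -/
def normD (a : DTy) : ℚ := (a.map Prod.fst).sum

/-- Typing derivations `Π ⊳ Γ ⊢_w M : σ`. -/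
inductive Deriv : Ctx → ℚ → Tm → Ty → Type
  | var (x : ℕ) (A : ITy) :
      Deriv (Function.update emptyCtx x A) 0 (.val (.var x)) (.inter A)
  | zero (M : Tm) : Deriv emptyCtx 0 M (.dist [])
  | lam {Γ : Ctx} {w : ℚ} {M : Tm} (x : ℕ) (b : DTy) :
      Deriv Γ w M (.dist b) →
      Deriv (Function.update Γ x []) (w + 1) (.val (.lam x M)) (.arrow (.arr (Γ x) b))
  | app {Γ Δ : Ctx} {w v : ℚ} {V W : Val} {A : ITy} {b : DTy} :
      Deriv Γ w (.val V) (.inter [(1, .arr A b)]) →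
      Deriv Δ v (.val W) (.inter A) →
      Deriv (ctxUnion Γ Δ) (w + v) (.app V W) (.dist b)
  | choice {Γ Δ : Ctx} {w v : ℚ} {M N : Tm} {a b : DTy} :
      Deriv Γ w M (.dist a) → Deriv Δ v N (.dist b) →
      Deriv (ctxUnion (fun y => scaleL (1/2) (Γ y)) (fun y => scaleL (1/2) (Δ y)))
        (w / 2 + v / 2 + 1) (.choice M N)
        (.dist (scaleL (1/2) a ++ scaleL (1/2) b))
  | letin {Γ : Ctx} {v : ℚ} (x : ℕ) {N M : Tm}
      (K : List (ℚ × ITy × Ctx × ℚ × DTy)) :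
      (∀ k ∈ K, k.2.2.1 x = []) →
      ((i : Fin K.length) →
        Deriv (Function.update (K.get i).2.2.1 x (K.get i).2.1)
          (K.get i).2.2.2.1 M (.dist (K.get i).2.2.2.2)) →
      Deriv Γ v N (.dist (K.map fun k => (k.1, k.2.1))) →
      Deriv (ctxUnion Γ (fun y => (K.map fun k => scaleL k.1 (k.2.2.1 y)).flatten))
        ((K.map fun k => k.1 * k.2.2.2.1).sum + v + 1)
        (.letin x N M)
        (.dist (K.map fun k => scaleL k.1 k.2.2.2.2).flatten)
  | tval {Γ : Ctx} {w : ℚ} {V : Val} {A : ITy} :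
      Deriv Γ w (.val V) (.inter A) → Deriv Γ w (.val V) (.dist [(1, A)])
  | bang {V : Val} (I : List (ℚ × Ctx × ℚ × ATy)) :
      (∀ k ∈ I, 0 < k.1 ∧ k.1 ≤ 1) →
      ((i : Fin I.length) →
        Deriv (I.get i).2.1 (I.get i).2.2.1 (.val V) (.arrow (I.get i).2.2.2)) →
      Deriv (fun y => (I.map fun k => scaleL k.1 (k.2.1 y)).flatten)
        ((I.map fun k => k.1 * k.2.2.1).sum) (.val V)
        (.inter (I.map fun k => (k.1, k.2.2.2)))

/-- Size of a derivation: the number of rules, excluding `!` and `Val`. -/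
def Deriv.size : ∀ {Γ : Ctx} {w : ℚ} {M : Tm} {τ : Ty}, Deriv Γ w M τ → ℕ
  | _, _, _, _, .var _ _ => 1
  | _, _, _, _, .zero _ => 1
  | _, _, _, _, .lam _ _ d => d.size + 1
  | _, _, _, _, .app d e => d.size + e.size + 1
  | _, _, _, _, .choice d e => d.size + e.size + 1
  | _, _, _, _, .letin _ _ _ f d => d.size + (List.ofFn fun i => (f i).size).sum + 1
  | _, _, _, _, .tval d => d.size
  | _, _, _, _, .bang _ _ f => (List.ofFn fun i => (f i).size).sum

/-! ### Infrastructure -/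

def stepL : Tm → List (ℚ × Tm)
  | .val V => [(1, .val V)]
  | .app (.lam x M) W => [(1, substT M x W)]
  | .app (.var y) W => [(1, .app (.var y) W)]
  | .choice M N => [(1/2, M), (1/2, N)]
  | .letin x (.val V) M => [(1, substT M x V)]
  | .letin x N M => (stepL N).map fun p => (p.1, Tm.letin x p.2 M)

lemma stepL_coe : ∀ (M : Tm), (↑(stepL M) : MDist) = stepF M
  | .val V => rfl
  | .app (.lam x M) W => rfl
  | .app (.var y) W => rfl
  | .choice M N => rfl
  | .letin x (.val V) M => rfl
  | .letin x (.app V W) M => by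
      show (↑((stepL (.app V W)).map fun p => (p.1, Tm.letin x p.2 M)) : MDist)
          = (stepF (.app V W)).map fun p => (p.1, Tm.letin x p.2 M)
      rw [← stepL_coe (.app V W), Multiset.map_coe]
  | .letin x (.choice N1 N2) M => by
      show (↑((stepL (.choice N1 N2)).map fun p => (p.1, Tm.letin x p.2 M)) : MDist)
          = (stepF (.choice N1 N2)).map fun p => (p.1, Tm.letin x p.2 M)
      rw [← stepL_coe (.choice N1 N2), Multiset.map_coe]
  | .letin x (.letin y N1 N2) M => by
      show (↑((stepL (.letin y N1 N2)).map fun p => (p.1, Tm.letin x p.2 M)) : MDist)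
          = (stepF (.letin y N1 N2)).map fun p => (p.1, Tm.letin x p.2 M)
      rw [← stepL_coe (.letin y N1 N2), Multiset.map_coe]

lemma stepL_mass : ∀ (M : Tm), ((stepL M).map Prod.fst).sum = 1
  | .val V => by simp [stepL]
  | .app (.lam x M) W => by simp [stepL]
  | .app (.var y) W => by simp [stepL]
  | .choice M N => by simp [stepL]; norm_num
  | .letin x (.val V) M => by simp [stepL]
  | .letin x (.app V W) M => by
      simpa [stepL, List.map_map, Function.comp_def] using stepL_mass (.app V W)
  | .letin x (.choice N1 N2) M => by
      simpa [stepL, List.map_map, Function.comp] using stepL_mass (.choice N1 N2)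
  | .letin x (.letin y N1 N2) M => by
      simpa [stepL, List.map_map, Function.comp_def] using stepL_mass (.letin y N1 N2)

lemma stepL_pos : ∀ (M : Tm), ∀ p ∈ stepL M, 0 < p.1 ∧ p.1 ≤ 1
  | .val V => by simp [stepL]
  | .app (.lam x M) W => by simp [stepL]
  | .app (.var y) W => by simp [stepL]
  | .choice M N => by simp [stepL]; norm_num
  | .letin x (.val V) M => by simp [stepL]
  | .letin x (.app V W) M => by
      intro p hp; simp only [stepL, List.mem_map] at hp
      obtain ⟨q, hq, rfl⟩ := hp; exact stepL_pos (.app V W) q hq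
  | .letin x (.choice N1 N2) M => by
      intro p hp; simp only [stepL, List.mem_map] at hp
      obtain ⟨q, hq, rfl⟩ := hp; exact stepL_pos (.choice N1 N2) q hq
  | .letin x (.letin y N1 N2) M => by
      intro p hp; simp only [stepL, List.mem_map] at hp
      obtain ⟨q, hq, rfl⟩ := hp; exact stepL_pos (.letin y N1 N2) q hq

lemma mstepF_add (m n : MDist) : mstepF (m + n) = mstepF m + mstepF n := by
  simp [mstepF]

lemma scaleM_add (q : ℚ) (m n : MDist) : scaleM q (m + n) = scaleM q m + scaleM q n := by
  simp [scaleM]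

lemma scaleM_scaleM (q p : ℚ) (m : MDist) : scaleM q (scaleM p m) = scaleM (q*p) m := by
  simp [scaleM, Multiset.map_map, Function.comp, mul_assoc]

lemma scaleM_one (m : MDist) : scaleM 1 m = m := by
  simp [scaleM]

lemma scaleM_sum (q : ℚ) (s : Multiset MDist) :
    scaleM q s.sum = (s.map (scaleM q)).sum := by
  induction s using Multiset.induction with
  | empty => simp [scaleM]
  | cons a s ih => simp [scaleM_add, ih]

lemma mstepF_scale (q : ℚ) (m : MDist) : mstepF (scaleM q m) = scaleM q (mstepF m) := by
  show ((scaleM q m).map (fun p => scaleM p.1 (stepF p.2))).sum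
      = scaleM q ((m.map fun p => scaleM p.1 (stepF p.2)).sum)
  rw [scaleM_sum, Multiset.map_map, scaleM, Multiset.map_map]
  apply congrArg Multiset.sum
  apply Multiset.map_congr rfl
  intro x _
  simp [Function.comp, scaleM_scaleM]

lemma mstepF_zero : mstepF 0 = 0 := by simp [mstepF]

lemma mstepF_iter_zero (k : ℕ) : mstepF^[k] (0 : MDist) = 0 := by
  induction k with
  | zero => rfl
  | succ k ih => rw [Function.iterate_succ_apply, mstepF_zero, ih]

lemma mstepF_iter_add (k : ℕ) (m n : MDist) :
    mstepF^[k] (m + n) = mstepF^[k] m + mstepF^[k] n := by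
  induction k generalizing m n with
  | zero => rfl
  | succ k ih => simp [Function.iterate_succ_apply, mstepF_add, ih]

lemma mstepF_iter_scale (k : ℕ) (q : ℚ) (m : MDist) :
    mstepF^[k] (scaleM q m) = scaleM q (mstepF^[k] m) := by
  induction k generalizing m with
  | zero => rfl
  | succ k ih => simp [Function.iterate_succ_apply, mstepF_scale, ih]

lemma normV_add (m n : MDist) : normV (m + n) = normV m + normV n := by
  simp [normV, Multiset.filter_add]

lemma normV_scale (q : ℚ) (m : MDist) : normV (scaleM q m) = q * normV m := by
  simp only [normV, scaleM]
  rw [Multiset.filter_map]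
  simp [Multiset.map_map, Function.comp, Multiset.sum_map_mul_left]

lemma mstepF_singleton (q : ℚ) (M : Tm) : mstepF {(q, M)} = scaleM q (stepF M) := by
  simp [mstepF]

lemma singleton_scale (q : ℚ) (M : Tm) : ({(q, M)} : MDist) = scaleM q {(1, M)} := by
  simp [scaleM]

lemma mstepF_iter_singleton (k : ℕ) (q : ℚ) (M : Tm) :
    mstepF^[k] {(q, M)} = scaleM q (traj M k) := by
  rw [singleton_scale, mstepF_iter_scale]; rfl

lemma normV_mstepF_iter (k : ℕ) (l : List (ℚ × Tm)) :
    normV (mstepF^[k] ↑l) = (l.map fun p => p.1 * evalP k p.2).sum := by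
  induction l with
  | nil => simp [mstepF_iter_zero, normV]
  | cons a l ih =>
    have : (↑(a :: l) : MDist) = {(a.1, a.2)} + ↑l := by
      simp
    rw [this, mstepF_iter_add, normV_add, ih, mstepF_iter_singleton, normV_scale]
    rfl

lemma evalP_succ (k : ℕ) (M : Tm) :
    evalP (k+1) M = ((stepL M).map fun p => p.1 * evalP k p.2).sum := by
  have h1 : traj M (k+1) = mstepF^[k] (stepF M) := by
    rw [traj, Function.iterate_succ_apply]
    congr 1
    rw [mstepF_singleton, scaleM_one]
  rw [evalP, h1, ← stepL_coe, normV_mstepF_iter]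

lemma evalP_zero_val (V : Val) : evalP 0 (.val V) = 1 := by
  show ((({(1, Tm.val V)} : MDist).filter fun p => p.2.isVal = true).map Prod.fst).sum = 1
  rw [Multiset.filter_singleton, if_pos (show (1, Tm.val V).2.isVal = true from rfl)]; simp

lemma evalP_zero_nonval (M : Tm) (h : M.isVal = false) : evalP 0 M = 0 := by
  simp [evalP, traj, normV, Multiset.filter_singleton, h]

lemma evalP_val (k : ℕ) (V : Val) : evalP k (.val V) = 1 := by
  induction k with
  | zero => exact evalP_zero_val V
  | succ k ih => rw [evalP_succ]; simp [stepL, ih]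

lemma etime_val (k : ℕ) (V : Val) : etime k (.val V) = 0 := by
  simp [etime, evalP_val]

lemma list_sum_sub {α : Type} (l : List α) (f g : α → ℚ) :
    (l.map f).sum - (l.map g).sum = (l.map fun a => f a - g a).sum := by
  induction l with
  | nil => simp
  | cons a l ih => simp only [List.map_cons, List.sum_cons, ← ih]; ring

lemma sum_exchange (L : List (ℚ × Tm)) (k : ℕ) :
    ∑ j ∈ Finset.range k, (L.map fun p => p.1 * (1 - evalP j p.2)).sum
      = (L.map fun p => p.1 * etime k p.2).sum := by
  induction L with
  | nil => simp
  | cons a l ih =>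
    simp only [List.map_cons, List.sum_cons, Finset.sum_add_distrib, ih, etime,
      Finset.mul_sum]

lemma etime_succ (k : ℕ) (M : Tm) (h : M.isVal = false) :
    etime (k+1) M = 1 + ((stepL M).map fun p => p.1 * etime k p.2).sum := by
  have key : ∀ j, 1 - evalP (j+1) M = ((stepL M).map fun p => p.1 * (1 - evalP j p.2)).sum := by
    intro j
    rw [evalP_succ]
    have hm := stepL_mass M
    conv_lhs => rw [show (1:ℚ) = ((stepL M).map Prod.fst).sum from hm.symm]
    rw [list_sum_sub]
    apply congrArg List.sum
    apply List.map_congr_left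
    intro a _
    ring
  rw [etime, Finset.sum_range_succ']
  rw [Finset.sum_congr rfl (fun j _ => key j), sum_exchange, evalP_zero_nonval M h]
  ring

mutual
lemma fv_substV (V : Val) (x : ℕ) (W : Val) :
    fvV (substV V x W) ⊆ (fvV V \ {x}) ∪ fvV W := by
  cases V with
  | var y =>
    by_cases h : y = x
    · simp [substV, h, fvV]
    · simp only [substV, if_neg h, fvV]
      intro z hz
      simp only [Finset.mem_singleton] at hz
      simp only [Finset.mem_union, Finset.mem_sdiff, Finset.mem_singleton, fvV]
      subst hz; left; exact ⟨rfl, h⟩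
  | lam y M =>
    by_cases h : y = x
    · simp only [substV, if_pos h, fvV]
      intro z hz
      simp only [Finset.mem_union, Finset.mem_sdiff, Finset.mem_singleton] at hz ⊢
      subst h; tauto
    · simp only [substV, if_neg h, fvV]
      intro z hz
      simp only [Finset.mem_sdiff, Finset.mem_union, Finset.mem_singleton] at hz ⊢
      obtain ⟨hz1, hz2⟩ := hz
      have := fv_substT M x W hz1
      simp only [Finset.mem_union, Finset.mem_sdiff, Finset.mem_singleton] at this
      tauto

lemma fv_substT (M : Tm) (x : ℕ) (W : Val) :
    fvT (substT M x W) ⊆ (fvT M \ {x}) ∪ fvV W := by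
  cases M with
  | val V => exact fv_substV V x W
  | app V U =>
    simp only [substT, fvT]
    intro z hz
    simp only [Finset.mem_union] at hz
    simp only [Finset.mem_union, Finset.mem_sdiff, Finset.mem_singleton]
    rcases hz with hz | hz
    · have := fv_substV V x W hz
      simp only [Finset.mem_union, Finset.mem_sdiff, Finset.mem_singleton] at this
      tauto
    · have := fv_substV U x W hz
      simp only [Finset.mem_union, Finset.mem_sdiff, Finset.mem_singleton] at this
      tauto
  | choice M1 M2 =>
    simp only [substT, fvT]
    intro z hz
    simp only [Finset.mem_union] at hz
    simp only [Finset.mem_union, Finset.mem_sdiff, Finset.mem_singleton]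
    rcases hz with hz | hz
    · have := fv_substT M1 x W hz
      simp only [Finset.mem_union, Finset.mem_sdiff, Finset.mem_singleton] at this
      tauto
    · have := fv_substT M2 x W hz
      simp only [Finset.mem_union, Finset.mem_sdiff, Finset.mem_singleton] at this
      tauto
  | letin y N M1 =>
    simp only [substT, fvT]
    intro z hz
    simp only [Finset.mem_union, Finset.mem_sdiff, Finset.mem_singleton] at hz ⊢
    rcases hz with hz | ⟨hz1, hz2⟩
    · have := fv_substT N x W hz
      simp only [Finset.mem_union, Finset.mem_sdiff, Finset.mem_singleton] at this
      tauto
    · by_cases h : y = x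
      · rw [if_pos h] at hz1
        left; refine ⟨Or.inr ⟨hz1, hz2⟩, ?_⟩
        rw [← h]; intro hc; rw [hc] at hz2; exact hz2 rfl
      · rw [if_neg h] at hz1
        have := fv_substT M1 x W hz1
        simp only [Finset.mem_union, Finset.mem_sdiff, Finset.mem_singleton] at this
        tauto
end

lemma substT_closed {M : Tm} {x : ℕ} {W : Val} (hM : fvT M ⊆ {x}) (hW : W.Closed) :
    (substT M x W).Closed := by
  have h := fv_substT M x W
  rw [Tm.Closed, ← Finset.subset_empty]
  refine h.trans ?_
  rw [hW]
  intro z hz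
  simp only [Finset.mem_union, Finset.mem_sdiff, Finset.mem_singleton] at hz
  rcases hz with ⟨h1, h2⟩ | h1
  · exact absurd (Finset.mem_singleton.mp (hM h1)) h2
  · simp at h1

lemma letin_closed_parts {x : ℕ} {N M : Tm} (h : (Tm.letin x N M).Closed) :
    N.Closed ∧ fvT M ⊆ {x} := by
  rw [Tm.Closed, fvT, Finset.union_eq_empty] at h
  refine ⟨h.1, ?_⟩
  intro z hz
  by_contra hc
  have : z ∈ fvT M \ {x} := Finset.mem_sdiff.mpr ⟨hz, by simpa using hc⟩
  rw [h.2] at this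
  simp at this

lemma stepL_closed_letin (x : ℕ) (N M : Tm)
    (ih : N.Closed → ∀ p ∈ stepL N, p.2.Closed)
    (hL : stepL (.letin x N M) = (stepL N).map fun p => (p.1, Tm.letin x p.2 M)) :
    (Tm.letin x N M).Closed → ∀ p ∈ stepL (.letin x N M), p.2.Closed := by
  intro h p hp
  obtain ⟨hN, hM⟩ := letin_closed_parts h
  rw [hL] at hp
  simp only [List.mem_map] at hp
  obtain ⟨q, hq, rfl⟩ := hp
  have hq2 := ih hN q hq
  show (Tm.letin x q.2 M).Closed
  rw [Tm.Closed, fvT, Finset.union_eq_empty]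
  exact ⟨hq2, Finset.sdiff_eq_empty_iff_subset.mpr hM⟩

lemma stepL_closed : ∀ (M : Tm), M.Closed → ∀ p ∈ stepL M, p.2.Closed
  | .val V => by intro h p hp; simp [stepL] at hp; rw [hp]; exact h
  | .app (.lam x B) W => by
      intro h p hp; simp [stepL] at hp
      rw [Tm.Closed, fvT, Finset.union_eq_empty, fvV] at h
      rw [hp]
      show (substT B x W).Closed
      apply substT_closed _ h.2
      intro z hz
      by_contra hc
      have : z ∈ fvT B \ {x} := Finset.mem_sdiff.mpr ⟨hz, by simpa using hc⟩
      rw [h.1] at this; simp at this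
  | .app (.var y) W => by
      intro h p hp; simp [stepL] at hp; rw [hp]; exact h
  | .choice M N => by
      intro h p hp
      rw [Tm.Closed, fvT, Finset.union_eq_empty] at h
      simp [stepL] at hp
      rcases hp with hp | hp <;> rw [hp]
      exacts [h.1, h.2]
  | .letin x (.val V) M => by
      intro h p hp; simp [stepL] at hp
      obtain ⟨hc, hs⟩ := letin_closed_parts h
      rw [hp]
      show (substT M x V).Closed
      exact substT_closed hs hc
  | .letin x (.app V W) M => stepL_closed_letin x (.app V W) M (stepL_closed (.app V W)) rfl
  | .letin x (.choice N1 N2) M =>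
      stepL_closed_letin x (.choice N1 N2) M (stepL_closed (.choice N1 N2)) rfl
  | .letin x (.letin y N1 N2) M =>
      stepL_closed_letin x (.letin y N1 N2) M (stepL_closed (.letin y N1 N2)) rfl

/-! ### List algebra helpers -/

lemma scaleL_nil {α : Type} (q : ℚ) : scaleL q ([] : List (ℚ × α)) = [] := rfl

lemma scaleL_append {α : Type} (q : ℚ) (l1 l2 : List (ℚ × α)) :
    scaleL q (l1 ++ l2) = scaleL q l1 ++ scaleL q l2 := by simp [scaleL]

lemma scaleL_scaleL {α : Type} (q p : ℚ) (l : List (ℚ × α)) :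
    scaleL q (scaleL p l) = scaleL (q*p) l := by
  simp [scaleL, List.map_map, Function.comp, mul_assoc]

lemma scaleL_one {α : Type} (l : List (ℚ × α)) : scaleL 1 l = l := by simp [scaleL]

lemma scaleL_eq_nil {α : Type} {q : ℚ} {l : List (ℚ × α)} (h : scaleL q l = []) : l = [] := by
  simpa [scaleL] using h

lemma scaleL_flatten {α : Type} (q : ℚ) (L : List (List (ℚ × α))) :
    scaleL q L.flatten = (L.map (scaleL q)).flatten := by
  simp only [scaleL, List.map_flatten]
  rfl

lemma sum_map_mul_left' {α : Type} (l : List α) (q : ℚ) (f : α → ℚ) :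
    (l.map fun a => q * f a).sum = q * (l.map f).sum := by
  induction l with
  | nil => simp
  | cons a l ih => simp [ih]; ring

lemma normD_append (a b : DTy) : normD (a ++ b) = normD a + normD b := by
  simp [normD]

lemma normD_scaleL (q : ℚ) (a : DTy) : normD (scaleL q a) = q * normD a := by
  simp only [normD, scaleL, List.map_map]
  have : (Prod.fst ∘ fun p : ℚ × ITy => (q * p.1, p.2)) = fun p : ℚ × ITy => q * p.1 := rfl
  rw [this, sum_map_mul_left']

/-! ### A Prop-valued presentation of typing derivations

`GDeriv` mirrors `Deriv` but is a `Prop`, uses membership-based premises and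
additionally requires all scale factors in `let` rules to lie in `(0,1]`. -/

inductive GDeriv : Ctx → ℚ → Tm → Ty → Prop
  | var (x : ℕ) (A : ITy) :
      GDeriv (Function.update emptyCtx x A) 0 (.val (.var x)) (.inter A)
  | zero (M : Tm) : GDeriv emptyCtx 0 M (.dist [])
  | lam {Γ : Ctx} {w : ℚ} {M : Tm} (x : ℕ) (b : DTy) :
      GDeriv Γ w M (.dist b) →
      GDeriv (Function.update Γ x []) (w + 1) (.val (.lam x M)) (.arrow (.arr (Γ x) b))
  | app {Γ Δ : Ctx} {w v : ℚ} {V W : Val} {A : ITy} {b : DTy} :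
      GDeriv Γ w (.val V) (.inter [(1, .arr A b)]) →
      GDeriv Δ v (.val W) (.inter A) →
      GDeriv (ctxUnion Γ Δ) (w + v) (.app V W) (.dist b)
  | choice {Γ Δ : Ctx} {w v : ℚ} {M N : Tm} {a b : DTy} :
      GDeriv Γ w M (.dist a) → GDeriv Δ v N (.dist b) →
      GDeriv (ctxUnion (fun y => scaleL (1/2) (Γ y)) (fun y => scaleL (1/2) (Δ y)))
        (w / 2 + v / 2 + 1) (.choice M N)
        (.dist (scaleL (1/2) a ++ scaleL (1/2) b))
  | letin {Γ : Ctx} {v : ℚ} (x : ℕ) {N M : Tm}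
      (K : List (ℚ × ITy × Ctx × ℚ × DTy)) :
      (∀ k ∈ K, k.2.2.1 x = [] ∧ 0 < k.1 ∧ k.1 ≤ 1) →
      (∀ k ∈ K, GDeriv (Function.update k.2.2.1 x k.2.1) k.2.2.2.1 M (.dist k.2.2.2.2)) →
      GDeriv Γ v N (.dist (K.map fun k => (k.1, k.2.1))) →
      GDeriv (ctxUnion Γ (fun y => (K.map fun k => scaleL k.1 (k.2.2.1 y)).flatten))
        ((K.map fun k => k.1 * k.2.2.2.1).sum + v + 1)
        (.letin x N M)
        (.dist (K.map fun k => scaleL k.1 k.2.2.2.2).flatten)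
  | tval {Γ : Ctx} {w : ℚ} {V : Val} {A : ITy} :
      GDeriv Γ w (.val V) (.inter A) → GDeriv Γ w (.val V) (.dist [(1, A)])
  | bang {V : Val} (I : List (ℚ × Ctx × ℚ × ATy)) :
      (∀ k ∈ I, 0 < k.1 ∧ k.1 ≤ 1) →
      (∀ k ∈ I, GDeriv k.2.1 k.2.2.1 (.val V) (.arrow k.2.2.2)) →
      GDeriv (fun y => (I.map fun k => scaleL k.1 (k.2.1 y)).flatten)
        ((I.map fun k => k.1 * k.2.2.1).sum) (.val V)
        (.inter (I.map fun k => (k.1, k.2.2.2)))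

lemma GDeriv.cast {Γ Γ' : Ctx} {w w' : ℚ} {M : Tm} {τ τ' : Ty}
    (h : GDeriv Γ w M τ) (h1 : Γ = Γ') (h2 : w = w') (h3 : τ = τ') :
    GDeriv Γ' w' M τ' := h1 ▸ h2 ▸ h3 ▸ h

lemma GDeriv.toDeriv {Γ : Ctx} {w : ℚ} {M : Tm} {τ : Ty} (h : GDeriv Γ w M τ) :
    Nonempty (Deriv Γ w M τ) := by
  induction h with
  | var x A => exact ⟨Deriv.var x A⟩
  | zero M => exact ⟨Deriv.zero M⟩
  | lam x b _ ih => exact ⟨Deriv.lam x b ih.some⟩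
  | app _ _ ih1 ih2 => exact ⟨Deriv.app ih1.some ih2.some⟩
  | choice _ _ ih1 ih2 => exact ⟨Deriv.choice ih1.some ih2.some⟩
  | letin x K hK _ _ ihM ihN =>
    exact ⟨Deriv.letin x K (fun k hk => (hK k hk).1)
      (fun i => (ihM (K.get i) (List.get_mem K i)).some) ihN.some⟩
  | tval _ ih => exact ⟨Deriv.tval ih.some⟩
  | bang I hI _ ih =>
    exact ⟨Deriv.bang I hI (fun i => (ih (I.get i) (List.get_mem I i)).some)⟩

/-- Relevance: typing contexts are supported on free variables. -/
lemma GDeriv.relevance {Γ : Ctx} {w : ℚ} {M : Tm} {τ : Ty} (h : GDeriv Γ w M τ) :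
    ∀ y, y ∉ fvT M → Γ y = [] := by
  induction h with
  | var x A =>
    intro y hy
    have : y ≠ x := by simpa [fvT, fvV] using hy
    simp [Function.update_apply, this, emptyCtx]
  | zero M => intro y _; rfl
  | lam x b _ ih =>
    intro y hy
    rcases eq_or_ne y x with rfl | hne
    · simp [Function.update_apply]
    · rw [Function.update_apply, if_neg hne]
      apply ih
      simp only [fvT, fvV, Finset.mem_sdiff, Finset.mem_singleton] at hy ⊢
      intro hc; exact hy ⟨hc, hne⟩
  | app _ _ ih1 ih2 =>
    intro y hy
    simp only [fvT, Finset.mem_union] at hy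
    push_neg at hy
    show _ ++ _ = []
    rw [ih1 y hy.1, ih2 y hy.2]; rfl
  | choice _ _ ih1 ih2 =>
    intro y hy
    simp only [fvT, Finset.mem_union] at hy
    push_neg at hy
    show scaleL _ _ ++ scaleL _ _ = []
    rw [ih1 y hy.1, ih2 y hy.2]; rfl
  | letin x K hK _ _ ihM ihN =>
    intro y hy
    simp only [fvT, Finset.mem_union, Finset.mem_sdiff, Finset.mem_singleton] at hy
    push_neg at hy
    show _ ++ _ = []
    rw [ihN y hy.1, List.nil_append, List.flatten_eq_nil_iff]
    intro l hl
    simp only [List.mem_map] at hl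
    obtain ⟨k, hk, rfl⟩ := hl
    rcases eq_or_ne y x with rfl | hne
    · rw [(hK k hk).1]; rfl
    · have := ihM k hk y (fun hc => hne (hy.2 hc))
      rw [Function.update_apply, if_neg hne] at this
      rw [this]; rfl
  | tval _ ih => exact ih
  | bang I hI _ ih =>
    intro y hy
    rw [List.flatten_eq_nil_iff]
    intro l hl
    simp only [List.mem_map] at hl
    obtain ⟨k, hk, rfl⟩ := hl
    rw [ih k hk y hy]; rfl

lemma closed_val_lam {V : Val} (h : V.Closed) : ∃ z B, V = .lam z B := by
  cases V with
  | var x => exact absurd h (by simp [Val.Closed, fvV])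
  | lam z B => exact ⟨z, B, rfl⟩

lemma no_arrow_var {Γ : Ctx} {w : ℚ} {y : ℕ} {A : ATy} :
    ¬ GDeriv Γ w (.val (.var y)) (.arrow A) := by
  intro h; cases h

lemma list_skolem {α β : Type} (l : List α) (P : α → β → Prop) (h : ∀ a ∈ l, ∃ b, P a b) :
    ∃ l' : List (α × β), l'.map Prod.fst = l ∧ ∀ x ∈ l', P x.1 x.2 := by
  induction l with
  | nil => exact ⟨[], rfl, by simp⟩
  | cons a l ih =>
    obtain ⟨b, hb⟩ := h a (by simp)
    obtain ⟨l', h1, h2⟩ := ih (fun a ha => h a (by simp [ha]))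
    refine ⟨(a,b)::l', by simp [h1], ?_⟩
    intro x hx
    rcases List.mem_cons.mp hx with rfl | hx
    exacts [hb, h2 x hx]

lemma inter_lam_inv {Γ : Ctx} {w : ℚ} {z : ℕ} {B : Tm} {A : ITy}
    (h : GDeriv Γ w (.val (.lam z B)) (.inter A)) :
    ∃ I : List (ℚ × Ctx × ℚ × ATy),
      (∀ k ∈ I, 0 < k.1 ∧ k.1 ≤ 1) ∧
      (∀ k ∈ I, GDeriv k.2.1 k.2.2.1 (.val (.lam z B)) (.arrow k.2.2.2)) ∧
      Γ = (fun y => (I.map fun k => scaleL k.1 (k.2.1 y)).flatten) ∧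
      w = (I.map fun k => k.1 * k.2.2.1).sum ∧
      A = I.map fun k => (k.1, k.2.2.2) := by
  cases h with
  | bang I hI hd => exact ⟨I, hI, hd, rfl, rfl, rfl⟩

lemma GDeriv.merge {Γ₁ Γ₂ : Ctx} {w₁ w₂ : ℚ} {z : ℕ} {B : Tm} {A₁ A₂ : ITy}
    (h1 : GDeriv Γ₁ w₁ (.val (.lam z B)) (.inter A₁))
    (h2 : GDeriv Γ₂ w₂ (.val (.lam z B)) (.inter A₂)) :
    GDeriv (ctxUnion Γ₁ Γ₂) (w₁ + w₂) (.val (.lam z B)) (.inter (A₁ ++ A₂)) := by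
  obtain ⟨I₁, hI₁, hd₁, rfl, rfl, rfl⟩ := inter_lam_inv h1
  obtain ⟨I₂, hI₂, hd₂, rfl, rfl, rfl⟩ := inter_lam_inv h2
  refine (GDeriv.bang (I₁ ++ I₂) ?_ ?_).cast ?_ ?_ ?_
  · intro k hk; rcases List.mem_append.mp hk with hk | hk
    exacts [hI₁ k hk, hI₂ k hk]
  · intro k hk; rcases List.mem_append.mp hk with hk | hk
    exacts [hd₁ k hk, hd₂ k hk]
  · funext y; rw [List.map_append, List.flatten_append]; rfl
  · rw [List.map_append, List.sum_append]
  · rw [List.map_append]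

lemma GDeriv.scale {Γ : Ctx} {w : ℚ} {z : ℕ} {B : Tm} {A : ITy} {q : ℚ}
    (hq : 0 < q) (hq1 : q ≤ 1)
    (h : GDeriv Γ w (.val (.lam z B)) (.inter A)) :
    GDeriv (fun y => scaleL q (Γ y)) (q * w) (.val (.lam z B)) (.inter (scaleL q A)) := by
  obtain ⟨I, hI, hd, rfl, rfl, rfl⟩ := inter_lam_inv h
  refine (GDeriv.bang (I.map fun k => (q * k.1, k.2)) ?_ ?_).cast ?_ ?_ ?_
  · intro k hk
    simp only [List.mem_map] at hk
    obtain ⟨k', hk', rfl⟩ := hk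
    obtain ⟨h1, h2⟩ := hI k' hk'
    refine ⟨mul_pos hq h1, ?_⟩
    show q * k'.1 ≤ 1
    nlinarith
  · intro k hk
    simp only [List.mem_map] at hk
    obtain ⟨k', hk', rfl⟩ := hk
    exact hd k' hk'
  · funext y
    rw [List.map_map, scaleL_flatten, List.map_map]
    apply congrArg List.flatten
    apply List.map_congr_left
    intro k _
    show scaleL (q * k.1) (k.2.1 y) = scaleL q (scaleL k.1 (k.2.1 y))
    rw [scaleL_scaleL]
  · rw [List.map_map, ← sum_map_mul_left']
    apply congrArg List.sum
    apply List.map_congr_left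
    intro k _
    show (q * k.1) * k.2.2.1 = q * (k.1 * k.2.2.1)
    ring
  · simp [scaleL, List.map_map]

lemma empty_inter (V : Val) : GDeriv emptyCtx 0 (.val V) (.inter []) :=
  GDeriv.bang [] (by simp) (by simp)

lemma GDeriv.merge_empty {W : Val} {w₁ w₂ : ℚ} {A₁ A₂ : ITy} (hW : W.Closed)
    (h1 : GDeriv emptyCtx w₁ (.val W) (.inter A₁))
    (h2 : GDeriv emptyCtx w₂ (.val W) (.inter A₂)) :
    GDeriv emptyCtx (w₁ + w₂) (.val W) (.inter (A₁ ++ A₂)) := by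
  obtain ⟨z, B, rfl⟩ := closed_val_lam hW
  exact (h1.merge h2).cast (funext fun y => rfl) rfl rfl

lemma GDeriv.scale_empty {W : Val} {w : ℚ} {A : ITy} {q : ℚ} (hW : W.Closed)
    (hq : 0 < q) (hq1 : q ≤ 1)
    (h : GDeriv emptyCtx w (.val W) (.inter A)) :
    GDeriv emptyCtx (q * w) (.val W) (.inter (scaleL q A)) := by
  obtain ⟨z, B, rfl⟩ := closed_val_lam hW
  exact (GDeriv.scale hq hq1 h).cast (funext fun y => rfl) rfl rfl

lemma GDeriv.merge_list {W : Val} (hW : W.Closed) (L : List (ℚ × ℚ × ITy))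
    (hpos : ∀ e ∈ L, 0 < e.1 ∧ e.1 ≤ 1)
    (h : ∀ e ∈ L, GDeriv emptyCtx e.2.1 (.val W) (.inter e.2.2)) :
    GDeriv emptyCtx ((L.map fun e => e.1 * e.2.1).sum) (.val W)
      (.inter ((L.map fun e => scaleL e.1 e.2.2).flatten)) := by
  induction L with
  | nil => exact empty_inter W
  | cons e L ih =>
    have h1 := GDeriv.scale_empty hW (hpos e (by simp)).1 (hpos e (by simp)).2
      (h e (by simp))
    have h2 := ih (fun e' he' => hpos e' (by simp [he'])) (fun e' he' => h e' (by simp [he']))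
    simpa using GDeriv.merge_empty hW h1 h2

/-- Closed values are typable in the empty context only. -/
lemma closed_ctx_empty {W : Val} {Γ : Ctx} {w : ℚ} {τ : Ty} (hW : W.Closed)
    (h : GDeriv Γ w (.val W) τ) : Γ = emptyCtx := by
  funext y
  apply h.relevance
  show y ∉ fvV W
  rw [hW]
  simp

lemma val_dist_inv {Γ : Ctx} {w : ℚ} {W : Val} {b : DTy}
    (h : GDeriv Γ w (.val W) (.dist b)) :
    (Γ = emptyCtx ∧ w = 0 ∧ b = []) ∨
      ∃ A, b = [(1, A)] ∧ GDeriv Γ w (.val W) (.inter A) := by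
  cases h with
  | zero => exact Or.inl ⟨rfl, rfl, rfl⟩
  | tval h' => exact Or.inr ⟨_, rfl, h'⟩

/-- The shortcut case of anti-substitution: the substituted occurrence. -/
lemma anti_subst_var {W : Val} {Γ : Ctx} {w : ℚ} {τ : Ty} {x : ℕ} (hW : W.Closed)
    (h : GDeriv Γ w (.val W) τ) (hτ : ∀ A, τ ≠ .arrow A) :
    ∃ A' w1 w2, GDeriv (Function.update Γ x A') w1 (.val (.var x)) τ ∧
      GDeriv emptyCtx w2 (.val W) (.inter A') ∧ w1 + w2 = w := by
  have hΓ := closed_ctx_empty hW h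
  subst hΓ
  cases τ with
  | arrow A => exact absurd rfl (hτ A)
  | inter A => exact ⟨A, 0, w, GDeriv.var x A, h, zero_add w⟩
  | dist b =>
    rcases val_dist_inv h with ⟨_, rfl, rfl⟩ | ⟨A, rfl, h'⟩
    · refine ⟨[], 0, 0, ?_, empty_inter W, by norm_num⟩
      exact (GDeriv.zero _).cast (Function.update_eq_self x emptyCtx).symm rfl rfl
    · exact ⟨A, 0, w, GDeriv.tval (GDeriv.var x _), h', zero_add w⟩

/-! ### Syntactic inversion of substitution -/

lemma subst_val_inv {N : Tm} {x : ℕ} {W V' : Val} (h : substT N x W = .val V') :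
    ∃ Nv, N = .val Nv ∧ substV Nv x W = V' := by
  cases N with
  | val Nv => exact ⟨Nv, rfl, by injection h⟩
  | app _ _ => simp [substT] at h
  | choice _ _ => simp [substT] at h
  | letin _ _ _ => simp [substT] at h

lemma substV_eq_var {Nv : Val} {x y : ℕ} {W : Val} (h : substV Nv x W = .var y) :
    Nv = .var y ∨ Nv = .var x := by
  cases Nv with
  | var z =>
    by_cases hz : z = x
    · exact Or.inr (by rw [hz])
    · rw [substV, if_neg hz] at h; exact Or.inl h
  | lam z B => by_cases hz : z = x <;> simp [substV, hz] at h

lemma substV_eq_lam {Nv : Val} {x z : ℕ} {B' : Tm} {W : Val}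
    (h : substV Nv x W = .lam z B') :
    Nv = .var x ∨ ∃ B, Nv = .lam z B ∧
      ((z = x ∧ B = B') ∨ (z ≠ x ∧ substT B x W = B')) := by
  cases Nv with
  | var y =>
    by_cases hy : y = x
    · exact Or.inl (by rw [hy])
    · rw [substV, if_neg hy] at h; exact absurd h (by simp)
  | lam y B =>
    by_cases hy : y = x
    · rw [substV, if_pos hy] at h
      injection h with h1 h2
      subst h1
      exact Or.inr ⟨B, rfl, Or.inl ⟨hy, h2⟩⟩
    · rw [substV, if_neg hy] at h
      injection h with h1 h2
      subst h1
      exact Or.inr ⟨B, rfl, Or.inr ⟨hy, h2⟩⟩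

lemma subst_eq_app {N : Tm} {x : ℕ} {W V' U' : Val} (h : substT N x W = .app V' U') :
    ∃ N₁ N₂, N = .app N₁ N₂ ∧ substV N₁ x W = V' ∧ substV N₂ x W = U' := by
  cases N with
  | app N₁ N₂ => injection h with h1 h2; exact ⟨N₁, N₂, rfl, h1, h2⟩
  | val _ => simp [substT] at h
  | choice _ _ => simp [substT] at h
  | letin _ _ _ => simp [substT] at h

lemma subst_eq_choice {N : Tm} {x : ℕ} {W : Val} {M₁' M₂' : Tm}
    (h : substT N x W = .choice M₁' M₂') :
    ∃ N₁ N₂, N = .choice N₁ N₂ ∧ substT N₁ x W = M₁' ∧ substT N₂ x W = M₂' := by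
  cases N with
  | choice N₁ N₂ => injection h with h1 h2; exact ⟨N₁, N₂, rfl, h1, h2⟩
  | val _ => simp [substT] at h
  | app _ _ => simp [substT] at h
  | letin _ _ _ => simp [substT] at h

lemma subst_eq_letin {N : Tm} {x z : ℕ} {W : Val} {N' M'' : Tm}
    (h : substT N x W = .letin z N' M'') :
    ∃ N₀ M₀, N = .letin z N₀ M₀ ∧ substT N₀ x W = N' ∧
      (if z = x then M₀ else substT M₀ x W) = M'' := by
  cases N with
  | letin z' N₀ M₀ =>
    injection h with h1 h2 h3
    subst h1
    exact ⟨N₀, M₀, rfl, h2, h3⟩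
  | val _ => simp [substT] at h
  | app _ _ => simp [substT] at h
  | choice _ _ => simp [substT] at h

/-! ### Context utilities -/

lemma update_nil {Γ : Ctx} {x : ℕ} (h : Γ x = []) : Function.update Γ x [] = Γ := by
  rw [← h]; exact Function.update_eq_self x Γ

lemma ctxUnion_update (Γ Δ : Ctx) (x : ℕ) (A B : ITy) :
    ctxUnion (Function.update Γ x A) (Function.update Δ x B)
      = Function.update (ctxUnion Γ Δ) x (A ++ B) := by
  funext y
  by_cases h : y = x
  · subst h; simp [ctxUnion]
  · simp [ctxUnion, Function.update_apply, h]

lemma list_sum_add {α : Type} (l : List α) (f g : α → ℚ) :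
    (l.map f).sum + (l.map g).sum = (l.map fun a => f a + g a).sum := by
  induction l with
  | nil => simp
  | cons a l ih => simp only [List.map_cons, List.sum_cons, ← ih]; ring

/-! ### Anti-substitution -/

theorem anti_subst {x : ℕ} {W : Val} (hW : W.Closed) :
    ∀ {Γ : Ctx} {w : ℚ} {M' : Tm} {τ : Ty}, GDeriv Γ w M' τ →
    ∀ N : Tm, substT N x W = M' → Γ x = [] →
    (∀ A, τ = Ty.arrow A → N ≠ .val (.var x)) →
    ∃ A' w1 w2, GDeriv (Function.update Γ x A') w1 N τ ∧
      GDeriv emptyCtx w2 (.val W) (.inter A') ∧ w1 + w2 = w := by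
  intro Γ w M' τ h
  induction h with
  | var y A =>
    intro N hsub hx _
    obtain ⟨Nv, rfl, hv⟩ := subst_val_inv hsub
    rcases substV_eq_var hv with rfl | rfl
    · -- an untouched variable y; but maybe y = x, in which case Nv = .var x
      by_cases hyx : y = x
      · subst hyx
        -- N = val (var y) = val (var x): substV (var x) x W = var x forces W = var x,
        rw [substV, if_pos rfl] at hv
        subst hv
        exact absurd hW (by simp [Val.Closed, fvV])
      · refine ⟨[], 0, 0, ?_, empty_inter W, by norm_num⟩
        exact (GDeriv.var y A).cast (update_nil hx).symm rfl rfl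
    · -- Nv = var x : then W would be a variable, impossible since W is closed
      have hvv : substV (Val.var x) x W = W := by rw [substV, if_pos rfl]
      rw [hvv] at hv
      rw [hv] at hW
      exact absurd hW (by simp [Val.Closed, fvV])
  | zero M =>
    intro N hsub hx _
    refine ⟨[], 0, 0, ?_, empty_inter W, by norm_num⟩
    exact (GDeriv.zero N).cast (update_nil hx).symm rfl rfl
  | @lam Γ' w' B' z b hB ih =>
    intro N hsub hx harr
    obtain ⟨Nv, rfl, hv⟩ := subst_val_inv hsub
    rcases substV_eq_lam hv with rfl | ⟨B, rfl, hcase⟩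
    · exact absurd rfl (harr _ rfl)
    · rcases hcase with ⟨hzx, rfl⟩ | ⟨hzx, hsubB⟩
      · refine ⟨[], w' + 1, 0, ?_, empty_inter W, by ring⟩
        exact (GDeriv.lam z b hB).cast (update_nil hx).symm rfl rfl
      · have hx' : Γ' x = [] := by
          have := hx
          rwa [Function.update_apply, if_neg (fun hc => hzx hc.symm)] at this
        obtain ⟨A', w1, w2, h1, h2, h3⟩ := ih B hsubB hx' (by simp)
        refine ⟨A', w1 + 1, w2, ?_, h2, by linarith⟩
        refine (GDeriv.lam z b h1).cast ?_ rfl ?_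
        · rw [Function.update_comm hzx]
        · rw [Function.update_of_ne hzx]
  | @app Γ' Δ' wv wu V U A b hV hU ihV ihU =>
    intro N hsub hx harr
    obtain ⟨N₁, N₂, rfl, hv1, hv2⟩ := subst_eq_app hsub
    obtain ⟨hx1, hx2⟩ := List.append_eq_nil_iff.mp hx
    obtain ⟨A₁, a1, b1, g1, gw1, e1⟩ := ihV (.val N₁) (by rw [substT, hv1]) hx1 (by simp)
    obtain ⟨A₂, a2, b2, g2, gw2, e2⟩ := ihU (.val N₂) (by rw [substT, hv2]) hx2 (by simp)
    refine ⟨A₁ ++ A₂, a1 + a2, b1 + b2,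
      (GDeriv.app g1 g2).cast (ctxUnion_update _ _ _ _ _) rfl rfl,
      GDeriv.merge_empty hW gw1 gw2, by linarith⟩
  | @choice Γ' Δ' w1' w2' M₁ M₂ a b hM1 hM2 ih1 ih2 =>
    intro N hsub hx harr
    obtain ⟨N₁, N₂, rfl, hs1, hs2⟩ := subst_eq_choice hsub
    have hx' : scaleL (1/2) (Γ' x) ++ scaleL (1/2) (Δ' x) = [] := hx
    obtain ⟨hx1, hx2⟩ := List.append_eq_nil_iff.mp hx'
    replace hx1 := scaleL_eq_nil hx1
    replace hx2 := scaleL_eq_nil hx2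
    obtain ⟨A₁, a1, b1, g1, gw1, e1⟩ := ih1 N₁ hs1 hx1 (by simp)
    obtain ⟨A₂, a2, b2, g2, gw2, e2⟩ := ih2 N₂ hs2 hx2 (by simp)
    refine ⟨scaleL (1/2) A₁ ++ scaleL (1/2) A₂, a1/2 + a2/2 + 1, (1/2)*b1 + (1/2)*b2,
      (GDeriv.choice g1 g2).cast ?_ rfl rfl,
      GDeriv.merge_empty hW
        (GDeriv.scale_empty hW (by norm_num) (by norm_num) gw1)
        (GDeriv.scale_empty hW (by norm_num) (by norm_num) gw2), by linarith⟩
    funext y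
    by_cases hy : y = x
    · subst hy; simp [ctxUnion, Function.update_apply]
    · simp [ctxUnion, Function.update_apply, hy]
  | @letin Γ' v z N' M'' K hK hM hN ihM ihN =>
    intro N hsub hx harr
    obtain ⟨N₀, M₀, rfl, hsN, hsM⟩ := subst_eq_letin hsub
    have hx' : Γ' x ++ (K.map fun k => scaleL k.1 (k.2.2.1 x)).flatten = [] := hx
    obtain ⟨hxΓ, hxΘ⟩ := List.append_eq_nil_iff.mp hx'
    have hxk : ∀ k ∈ K, k.2.2.1 x = [] := fun k hk =>
      scaleL_eq_nil (List.flatten_eq_nil_iff.mp hxΘ _ (List.mem_map_of_mem hk))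
    obtain ⟨AN, n1, n2, hN', hWN, eN⟩ := ihN N₀ hsN hxΓ (by intro A h; simp at h)
    by_cases hzx : z = x
    · rw [if_pos hzx] at hsM
      subst hsM
      subst hzx
      refine ⟨AN, _, n2, (GDeriv.letin z K hK hM hN').cast ?_ rfl rfl, hWN, ?_⟩
      · funext y
        show Function.update Γ' z AN y ++ (List.map (fun k => scaleL k.1 (k.2.2.1 y)) K).flatten
            = Function.update
                (ctxUnion Γ' fun y' => (List.map (fun k => scaleL k.1 (k.2.2.1 y')) K).flatten)
                z AN y
        by_cases hy : y = z
        · rw [hy, Function.update_self, Function.update_self, hxΘ, List.append_nil]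
        · rw [Function.update_of_ne hy, Function.update_of_ne hy]
          rfl
      · linarith [eN]
    · rw [if_neg hzx] at hsM
      have hex : ∀ k ∈ K, ∃ t : ITy × ℚ × ℚ,
          GDeriv (Function.update (Function.update k.2.2.1 z k.2.1) x t.1) t.2.1 M₀
            (.dist k.2.2.2.2) ∧
          GDeriv emptyCtx t.2.2 (.val W) (.inter t.1) ∧ t.2.1 + t.2.2 = k.2.2.2.1 := by
        intro k hk
        obtain ⟨A', w1, w2, h1, h2, e⟩ := ihM k hk M₀ hsM
          (by rw [Function.update_of_ne (fun hc => hzx hc.symm)]; exact hxk k hk)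
          (by intro A h; simp at h)
        exact ⟨(A', w1, w2), h1, h2, e⟩
      obtain ⟨l', hl1, hl2⟩ := list_skolem K _ hex
      have hmem : ∀ e ∈ l', e.1 ∈ K := fun e he => hl1 ▸ List.mem_map_of_mem (f := Prod.fst) he
      refine ⟨AN ++ (l'.map fun e => scaleL e.1.1 e.2.1).flatten,
              (l'.map fun e => e.1.1 * e.2.2.1).sum + n1 + 1,
              n2 + (l'.map fun e => e.1.1 * e.2.2.2).sum, ?_, ?_, ?_⟩
      · refine (GDeriv.letin (Γ := Function.update Γ' x AN) z
          (l'.map fun e =>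
            (e.1.1, e.1.2.1, Function.update e.1.2.2.1 x e.2.1, e.2.2.1, e.1.2.2.2.2))
          ?_ ?_ ?_).cast ?_ (by rw [List.map_map]; rfl) ?_
        · intro k hk
          simp only [List.mem_map] at hk
          obtain ⟨e, he, rfl⟩ := hk
          refine ⟨?_, (hK e.1 (hmem e he)).2⟩
          show Function.update e.1.2.2.1 x e.2.1 z = []
          rw [Function.update_of_ne hzx]
          exact (hK e.1 (hmem e he)).1
        · intro k hk
          simp only [List.mem_map] at hk
          obtain ⟨e, he, rfl⟩ := hk
          refine ((hl2 e he).1).cast ?_ rfl rfl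
          show Function.update (Function.update e.1.2.2.1 z e.1.2.1) x e.2.1
              = Function.update (Function.update e.1.2.2.1 x e.2.1) z e.1.2.1
          rw [Function.update_comm (show z ≠ x from hzx)]
        · refine hN'.cast rfl rfl ?_
          rw [List.map_map, ← hl1, List.map_map]
          rfl
        · funext y
          show Function.update Γ' x AN y
              ++ ((l'.map fun e =>
                    (e.1.1, e.1.2.1, Function.update e.1.2.2.1 x e.2.1, e.2.2.1,
                      e.1.2.2.2.2)).map fun k => scaleL k.1 (k.2.2.1 y)).flatten
              = Function.update
                  (ctxUnion Γ' fun y' => (K.map fun k => scaleL k.1 (k.2.2.1 y')).flatten)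
                  x (AN ++ (l'.map fun e => scaleL e.1.1 e.2.1).flatten) y
          by_cases hy : y = x
          · rw [hy, Function.update_self, Function.update_self, List.map_map]
            apply congrArg (AN ++ ·)
            apply congrArg List.flatten
            apply List.map_congr_left
            intro e _
            show scaleL e.1.1 (Function.update e.1.2.2.1 x e.2.1 x) = scaleL e.1.1 e.2.1
            rw [Function.update_self]
          · rw [Function.update_of_ne hy, Function.update_of_ne hy, List.map_map]
            show _ = Γ' y ++ (K.map fun k => scaleL k.1 (k.2.2.1 y)).flatten
            apply congrArg (Γ' y ++ ·)
            rw [← hl1, List.map_map]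
            apply congrArg List.flatten
            apply List.map_congr_left
            intro e _
            show scaleL e.1.1 (Function.update e.1.2.2.1 x e.2.1 y) = scaleL e.1.1 (e.1.2.2.1 y)
            rw [Function.update_of_ne hy]
        · show Ty.dist _ = Ty.dist _
          rw [List.map_map, ← hl1, List.map_map]
          rfl
      · refine GDeriv.merge_empty hW hWN ?_
        have hmg := GDeriv.merge_list hW (l'.map fun e => (e.1.1, e.2.2.2, e.2.1))
          (by intro e he
              simp only [List.mem_map] at he
              obtain ⟨e', he', rfl⟩ := he
              exact (hK e'.1 (hmem e' he')).2)
          (by intro e he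
              simp only [List.mem_map] at he
              obtain ⟨e', he', rfl⟩ := he
              exact (hl2 e' he').2.1)
        refine hmg.cast rfl ?_ ?_
        · rw [List.map_map]
          rfl
        · rw [List.map_map]
          rfl
      · have h2 : (l'.map fun e => e.1.1 * e.2.2.1).sum
            + (l'.map fun e => e.1.1 * e.2.2.2).sum
            = (K.map fun k => k.1 * k.2.2.2.1).sum := by
          rw [list_sum_add, ← hl1, List.map_map]
          apply congrArg List.sum
          apply List.map_congr_left
          intro e he
          have := (hl2 e he).2.2
          show e.1.1 * e.2.2.1 + e.1.1 * e.2.2.2 = e.1.1 * e.1.2.2.2.1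
          rw [← this]; ring
        linarith [eN, h2]
  | @tval Γ' w' V' A hV ih =>
    intro N hsub hx harr
    obtain ⟨Nv, rfl, hv⟩ := subst_val_inv hsub
    obtain ⟨A', w1, w2, h1, h2, e⟩ := ih (.val Nv) (by rw [substT, hv]) hx (by simp)
    exact ⟨A', w1, w2, GDeriv.tval h1, h2, e⟩
  | @bang V' I hI hD ihD =>
    intro N hsub hx harr
    obtain ⟨Nv, rfl, hv⟩ := subst_val_inv hsub
    have hxk : ∀ k ∈ I, k.2.1 x = [] := by
      intro k hk
      exact scaleL_eq_nil (List.flatten_eq_nil_iff.mp hx _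
        (List.mem_map_of_mem hk))
    cases Nv with
    | var zv =>
      by_cases hzx : zv = x
      · subst hzx
        rw [substV, if_pos rfl] at hv
        subst hv
        exact anti_subst_var hW (GDeriv.bang I hI hD) (by simp)
      · rw [substV, if_neg hzx] at hv
        subst hv
        cases I with
        | nil =>
          refine ⟨[], 0, 0, ?_, empty_inter W, by norm_num⟩
          exact (empty_inter (.var zv)).cast (update_nil hx).symm rfl rfl
        | cons k I' => exact absurd (hD k (by simp)) no_arrow_var
    | lam zv B =>
      rw [substV] at hv
      by_cases hzx : zv = x
      · rw [if_pos hzx] at hv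
        subst hv
        refine ⟨[], _, 0, ?_, empty_inter W, by ring⟩
        exact (GDeriv.bang I hI hD).cast (update_nil hx).symm rfl rfl
      · rw [if_neg hzx] at hv
        subst hv
        have hex : ∀ k ∈ I, ∃ t : ITy × ℚ × ℚ,
            GDeriv (Function.update k.2.1 x t.1) t.2.1 (.val (.lam zv B)) (.arrow k.2.2.2) ∧
            GDeriv emptyCtx t.2.2 (.val W) (.inter t.1) ∧ t.2.1 + t.2.2 = k.2.2.1 := by
          intro k hk
          obtain ⟨A', w1, w2, h1, h2, e⟩ := ihD k hk (.val (.lam zv B))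
            (by rw [substT, substV, if_neg hzx]) (hxk k hk) (by intro _ _; simp)
          exact ⟨(A', w1, w2), h1, h2, e⟩
        obtain ⟨l', hl1, hl2⟩ := list_skolem I _ hex
        have hmem : ∀ e ∈ l', e.1 ∈ I := fun e he =>
          hl1 ▸ List.mem_map_of_mem (f := Prod.fst) he
        refine ⟨(l'.map fun e => scaleL e.1.1 e.2.1).flatten,
                (l'.map fun e => e.1.1 * e.2.2.1).sum,
                (l'.map fun e => e.1.1 * e.2.2.2).sum, ?_, ?_, ?_⟩
        · refine (GDeriv.bang
            (l'.map fun e => (e.1.1, Function.update e.1.2.1 x e.2.1, e.2.2.1, e.1.2.2.2))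
            ?_ ?_).cast ?_ ?_ ?_
          · intro k hk
            simp only [List.mem_map] at hk
            obtain ⟨e, he, rfl⟩ := hk
            exact hI e.1 (hmem e he)
          · intro k hk
            simp only [List.mem_map] at hk
            obtain ⟨e, he, rfl⟩ := hk
            exact (hl2 e he).1
          · funext y
            rw [List.map_map]
            by_cases hy : y = x
            · subst hy
              rw [Function.update_self]
              apply congrArg List.flatten
              apply List.map_congr_left
              intro e _
              show scaleL e.1.1 (Function.update e.1.2.1 y e.2.1 y) = scaleL e.1.1 e.2.1
              rw [Function.update_self]
            · rw [Function.update_of_ne hy, ← hl1, List.map_map]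
              apply congrArg List.flatten
              apply List.map_congr_left
              intro e _
              show scaleL e.1.1 (Function.update e.1.2.1 x e.2.1 y) = scaleL e.1.1 (e.1.2.1 y)
              rw [Function.update_of_ne hy]
          · rw [List.map_map]
            rfl
          · rw [List.map_map, ← hl1, List.map_map]
            rfl
        · have hmg := GDeriv.merge_list hW (l'.map fun e => (e.1.1, e.2.2.2, e.2.1))
            (by intro e he
                simp only [List.mem_map] at he
                obtain ⟨e', he', rfl⟩ := he
                exact hI e'.1 (hmem e' he'))
            (by intro e he
                simp only [List.mem_map] at he
                obtain ⟨e', he', rfl⟩ := he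
                exact (hl2 e' he').2.1)
          refine hmg.cast rfl ?_ ?_
          · rw [List.map_map]; rfl
          · rw [List.map_map]; rfl
        · rw [list_sum_add, ← hl1, List.map_map]
          apply congrArg List.sum
          apply List.map_congr_left
          intro e he
          have := (hl2 e he).2.2
          show e.1.1 * e.2.2.1 + e.1.1 * e.2.2.2 = e.1.1 * e.1.2.2.1
          rw [← this]; ring

/-! ### Inversion for let, and expansion -/

lemma flatten_flatten' {α : Type} (L : List (List (List α))) :
    L.flatten.flatten = (L.map List.flatten).flatten := by
  induction L with
  | nil => rfl
  | cons l L ih => simp [List.flatten_append, ih]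

lemma letin_inv {Γ : Ctx} {w : ℚ} {z : ℕ} {N M : Tm} {a : DTy}
    (h : GDeriv Γ w (.letin z N M) (.dist a)) (hΓ : Γ = emptyCtx) :
    ∃ (K : List (ℚ × ITy × Ctx × ℚ × DTy)) (v : ℚ),
      (∀ k ∈ K, k.2.2.1 = emptyCtx ∧ 0 < k.1 ∧ k.1 ≤ 1) ∧
      (∀ k ∈ K, GDeriv (Function.update emptyCtx z k.2.1) k.2.2.2.1 M (.dist k.2.2.2.2)) ∧
      GDeriv emptyCtx v N (.dist (K.map fun k => (k.1, k.2.1))) ∧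
      a = (K.map fun k => scaleL k.1 k.2.2.2.2).flatten ∧
      w ≤ (K.map fun k => k.1 * k.2.2.2.1).sum + v + 1 := by
  cases h with
  | zero => exact ⟨[], 0, by simp, by simp, GDeriv.zero N, rfl, by norm_num⟩
  | @letin Γ₀ v _ _ _ K hK hM hN =>
    have hcomp : ∀ y, Γ₀ y ++ (K.map fun k => scaleL k.1 (k.2.2.1 y)).flatten = [] :=
      fun y => congrFun hΓ y
    have hΓ₀ : Γ₀ = emptyCtx := by
      funext y
      exact (List.append_eq_nil_iff.mp (hcomp y)).1
    have hΔ : ∀ k ∈ K, k.2.2.1 = emptyCtx := by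
      intro k hk
      funext y
      exact scaleL_eq_nil (List.flatten_eq_nil_iff.mp
        (List.append_eq_nil_iff.mp (hcomp y)).2 _ (List.mem_map_of_mem hk))
    refine ⟨K, v, fun k hk => ⟨hΔ k hk, (hK k hk).2⟩, ?_, hN.cast hΓ₀ rfl rfl, rfl, le_refl _⟩
    intro k hk
    exact (hM k hk).cast (by rw [hΔ k hk]) rfl rfl

lemma aux_letin {z : ℕ} {M₁ : Tm} :
    ∀ (L : List (ℚ × Tm)) (D : List (ℚ × Tm × ℚ × DTy)),
    D.map (fun d => (d.1, d.2.1)) = L.map (fun p => (p.1, Tm.letin z p.2 M₁)) →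
    (∀ p ∈ L, 0 ≤ p.1) →
    (∀ d ∈ D, GDeriv emptyCtx d.2.2.1 d.2.1 (.dist d.2.2.2)) →
    ∃ E : List (ℚ × Tm × ℚ × List (ℚ × ITy × Ctx × ℚ × DTy)),
      E.map (fun e => (e.1, e.2.1)) = L ∧
      (∀ e ∈ E, GDeriv emptyCtx e.2.2.1 e.2.1
        (.dist (e.2.2.2.map fun k => (k.1, k.2.1)))) ∧
      (∀ e ∈ E, ∀ k ∈ e.2.2.2,
        (GDeriv (Function.update emptyCtx z k.2.1) k.2.2.2.1 M₁ (.dist k.2.2.2.2)) ∧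
        k.2.2.1 = emptyCtx ∧ 0 < k.1 ∧ k.1 ≤ 1) ∧
      (D.map fun d => scaleL d.1 d.2.2.2).flatten
        = (E.map fun e =>
            scaleL e.1 ((e.2.2.2.map fun k => scaleL k.1 k.2.2.2.2).flatten)).flatten ∧
      (D.map fun d => d.1 * d.2.2.1).sum
        ≤ (E.map fun e =>
            e.1 * ((e.2.2.2.map fun k => k.1 * k.2.2.2.1).sum + e.2.2.1 + 1)).sum := by
  intro L
  induction L with
  | nil =>
    intro D hD _ _
    rw [List.map_nil, List.map_eq_nil_iff] at hD
    subst hD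
    exact ⟨[], rfl, by simp, by simp, rfl, by norm_num⟩
  | cons p L ih =>
    intro D hD hLpos hd
    cases D with
    | nil => simp at hD
    | cons d D' =>
      simp only [List.map_cons, List.cons.injEq] at hD
      obtain ⟨hd1, hDtail⟩ := hD
      have hd11 : d.1 = p.1 := congrArg Prod.fst hd1
      have hd12 : d.2.1 = Tm.letin z p.2 M₁ := congrArg Prod.snd hd1
      obtain ⟨K, v, hK1, hK2, hN, ha, hw⟩ := letin_inv (hd12 ▸ hd d (by simp)) rfl
      obtain ⟨E', hE1, hE2, hE3, hE4, hE5⟩ := ih D' hDtail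
        (fun q hq => hLpos q (by simp [hq])) (fun d' hd' => hd d' (by simp [hd']))
      refine ⟨(p.1, p.2, v, K) :: E', by simp [hE1], ?_, ?_, ?_, ?_⟩
      · intro e he
        rcases List.mem_cons.mp he with rfl | he
        · exact hN
        · exact hE2 e he
      · intro e he
        rcases List.mem_cons.mp he with rfl | he
        · intro k hk
          exact ⟨hK2 k hk, (hK1 k hk).1, (hK1 k hk).2⟩
        · exact hE3 e he
      · rw [List.map_cons, List.map_cons, List.flatten_cons, List.flatten_cons,
          hE4, ha, hd11]
      · rw [List.map_cons, List.map_cons, List.sum_cons, List.sum_cons]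
        have hle : d.1 * d.2.2.1
            ≤ p.1 * ((K.map fun k => k.1 * k.2.2.2.1).sum + v + 1) := by
          rw [hd11]
          exact mul_le_mul_of_nonneg_left hw (hLpos p (by simp))
        exact add_le_add hle hE5

lemma map_eq_singleton' {α β : Type} {f : α → β} {l : List α} {b : β}
    (h : l.map f = [b]) : ∃ a, l = [a] ∧ f a = b := by
  cases l with
  | nil => simp at h
  | cons a l' =>
    cases l' with
    | nil => exact ⟨a, rfl, by simpa using h⟩
    | cons a' l'' => simp at h

lemma map_eq_pair' {α β : Type} {f : α → β} {l : List α} {b1 b2 : β}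
    (h : l.map f = [b1, b2]) : ∃ a1 a2, l = [a1, a2] ∧ f a1 = b1 ∧ f a2 = b2 := by
  cases l with
  | nil => simp at h
  | cons a l' =>
    cases l' with
    | nil => simp at h
    | cons a' l'' =>
      cases l'' with
      | nil =>
        simp only [List.map_cons, List.map_nil, List.cons.injEq, and_true] at h
        exact ⟨a, a', rfl, h.1, h.2⟩
      | cons _ _ => simp at h

/-- The statement of finitary expansion. -/
def ExpandStmt (N : Tm) : Prop :=
  N.Closed → N.isVal = false →
    ∀ D : List (ℚ × Tm × ℚ × DTy),
    D.map (fun d => (d.1, d.2.1)) = stepL N →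
    (∀ d ∈ D, GDeriv emptyCtx d.2.2.1 d.2.1 (.dist d.2.2.2)) →
    ∃ w', GDeriv emptyCtx w' N (.dist ((D.map fun d => scaleL d.1 d.2.2.2).flatten)) ∧
      (D.map fun d => d.1 * d.2.2.1).sum + 1 ≤ w'

lemma expand_letin (z : ℕ) (N₁ M₁ : Tm)
    (hL : stepL (.letin z N₁ M₁) = (stepL N₁).map fun p => (p.1, Tm.letin z p.2 M₁))
    (hNv : N₁.isVal = false)
    (ih : ExpandStmt N₁) :
    ExpandStmt (.letin z N₁ M₁) := by
  intro hC _ D hD hd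
  rw [hL] at hD
  obtain ⟨E, hE1, hE2, hE3, hE4, hE5⟩ := aux_letin (stepL N₁) D hD
    (fun p hp => le_of_lt (stepL_pos N₁ p hp).1) hd
  have hN₁c : N₁.Closed := (letin_closed_parts hC).1
  obtain ⟨v', hv'd, hv'ge⟩ := ih hN₁c hNv
    (E.map fun e => (e.1, e.2.1, e.2.2.1, e.2.2.2.map fun k => (k.1, k.2.1)))
    (by rw [List.map_map]; exact hE1)
    (by intro d hd'
        simp only [List.mem_map] at hd'
        obtain ⟨e, he, rfl⟩ := hd'
        exact hE2 e he)
  have hmemE : ∀ e ∈ E, 0 < e.1 ∧ e.1 ≤ 1 := by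
    intro e he
    exact stepL_pos N₁ _ (hE1 ▸ List.mem_map_of_mem he)
  refine ⟨(((E.map fun e => e.2.2.2.map fun k => (e.1 * k.1, k.2)).flatten).map
      fun k => k.1 * k.2.2.2.1).sum + v' + 1, ?_, ?_⟩
  · refine (GDeriv.letin (Γ := emptyCtx) z
      ((E.map fun e => e.2.2.2.map fun k => (e.1 * k.1, k.2)).flatten) ?_ ?_ ?_).cast
      ?_ rfl ?_
    · intro k hk
      obtain ⟨l, hl, hkl⟩ := List.mem_flatten.mp hk
      simp only [List.mem_map] at hl
      obtain ⟨e, he, rfl⟩ := hl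
      simp only [List.mem_map] at hkl
      obtain ⟨k', hk', rfl⟩ := hkl
      obtain ⟨hg, hΔ, hp1, hp2⟩ := hE3 e he k' hk'
      refine ⟨?_, mul_pos (hmemE e he).1 hp1, ?_⟩
      · show k'.2.2.1 z = []
        rw [hΔ]; rfl
      · show e.1 * k'.1 ≤ 1
        nlinarith [(hmemE e he).1, (hmemE e he).2]
    · intro k hk
      obtain ⟨l, hl, hkl⟩ := List.mem_flatten.mp hk
      simp only [List.mem_map] at hl
      obtain ⟨e, he, rfl⟩ := hl
      simp only [List.mem_map] at hkl
      obtain ⟨k', hk', rfl⟩ := hkl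
      obtain ⟨hg, hΔ, _, _⟩ := hE3 e he k' hk'
      exact hg.cast (by rw [hΔ]) rfl rfl
    · refine hv'd.cast rfl rfl ?_
      show Ty.dist _ = Ty.dist _
      rw [List.map_map, List.map_flatten, List.map_map]
      apply congrArg Ty.dist
      apply congrArg List.flatten
      apply List.map_congr_left
      intro e _
      show scaleL e.1 (e.2.2.2.map fun k => (k.1, k.2.1)) = _
      simp [scaleL, List.map_map]
    · funext y
      show [] ++ _ = ([] : ITy)
      rw [List.nil_append, List.flatten_eq_nil_iff]
      intro l hl
      simp only [List.mem_map] at hl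
      obtain ⟨k, hk, rfl⟩ := hl
      obtain ⟨l', hl', hkl'⟩ := List.mem_flatten.mp hk
      simp only [List.mem_map] at hl'
      obtain ⟨e, he, rfl⟩ := hl'
      simp only [List.mem_map] at hkl'
      obtain ⟨k', hk', rfl⟩ := hkl'
      show scaleL (e.1 * k'.1) (k'.2.2.1 y) = []
      rw [(hE3 e he k' hk').2.1]
      rfl
    · show Ty.dist _ = Ty.dist _
      rw [hE4]
      apply congrArg Ty.dist
      rw [List.map_flatten, flatten_flatten', List.map_map, List.map_map]
      apply congrArg List.flatten
      apply List.map_congr_left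
      intro e _
      show ((e.2.2.2.map fun k => (e.1 * k.1, k.2)).map fun k =>
          scaleL k.1 k.2.2.2.2).flatten = scaleL e.1 _
      rw [List.map_map, scaleL_flatten, List.map_map]
      apply congrArg List.flatten
      apply List.map_congr_left
      intro k' _
      show scaleL (e.1 * k'.1) k'.2.2.2.2 = scaleL e.1 (scaleL k'.1 k'.2.2.2.2)
      rw [scaleL_scaleL]
  · have hKcsum : (((E.map fun e => e.2.2.2.map fun k => (e.1 * k.1, k.2)).flatten).map
        fun k => k.1 * k.2.2.2.1).sum
        = (E.map fun e => e.1 * (e.2.2.2.map fun k => k.1 * k.2.2.2.1).sum).sum := by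
      rw [List.map_flatten, List.sum_flatten, List.map_map, List.map_map]
      apply congrArg List.sum
      apply List.map_congr_left
      intro e _
      show ((e.2.2.2.map fun k => (e.1 * k.1, k.2)).map fun k => k.1 * k.2.2.2.1).sum = _
      rw [List.map_map, ← sum_map_mul_left']
      apply congrArg List.sum
      apply List.map_congr_left
      intro k' _
      show (e.1 * k'.1) * k'.2.2.2.1 = e.1 * (k'.1 * k'.2.2.2.1)
      ring
    have hv'sum : ((E.map fun e =>
          (e.1, e.2.1, e.2.2.1, e.2.2.2.map fun k => (k.1, k.2.1))).map
        fun d => d.1 * d.2.2.1).sum = (E.map fun e => e.1 * e.2.2.1).sum := by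
      rw [List.map_map]
      rfl
    have hmass : (E.map fun e => e.1).sum = 1 := by
      have h := stepL_mass N₁
      rw [← hE1, List.map_map] at h
      exact h
    have hsplit : (E.map fun e =>
          e.1 * ((e.2.2.2.map fun k => k.1 * k.2.2.2.1).sum + e.2.2.1 + 1)).sum
        = (E.map fun e => e.1 * (e.2.2.2.map fun k => k.1 * k.2.2.2.1).sum).sum
          + ((E.map fun e => e.1 * e.2.2.1).sum + (E.map fun e => e.1).sum) := by
      rw [list_sum_add, list_sum_add]
      apply congrArg List.sum
      apply List.map_congr_left
      intro e _
      ring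
    rw [hv'sum] at hv'ge
    rw [hKcsum]
    rw [hsplit, hmass] at hE5
    linarith

theorem expand : ∀ (N : Tm), ExpandStmt N
  | .val V => fun _ h => by simp [Tm.isVal] at h
  | .app (.var y) U => fun hC _ => by
      exfalso
      rw [Tm.Closed, fvT, fvV, Finset.union_eq_empty] at hC
      exact Finset.singleton_ne_empty y hC.1
  | .app (.lam z B) U => by
      intro hC _ D hD hd
      obtain ⟨d, rfl, hfd⟩ := map_eq_singleton' hD
      have h1 : d.1 = 1 := congrArg Prod.fst hfd
      have h2 : d.2.1 = substT B z U := congrArg Prod.snd hfd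
      rw [Tm.Closed, fvT, Finset.union_eq_empty, fvV] at hC
      have hU : U.Closed := hC.2
      have hdd := hd d (by simp)
      rw [h2] at hdd
      obtain ⟨A', w1, w2, hBd, hUd, he⟩ := anti_subst hU hdd B rfl rfl
        (by intro A h; simp at h)
      have hlam := (GDeriv.lam z d.2.2.2 hBd).cast
        (show _ = emptyCtx by rw [Function.update_idem]; exact update_nil rfl) rfl
        (show _ = Ty.arrow (.arr A' d.2.2.2) by rw [Function.update_self])
      have hbang := (GDeriv.bang [(1, emptyCtx, w1 + 1, .arr A' d.2.2.2)]
        (by norm_num)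
        (by intro k hk
            simp only [List.mem_singleton] at hk
            rw [hk]
            exact hlam)).cast rfl (by show 1 * (w1+1) + 0 = w1 + 1; ring) rfl
      have happ := (GDeriv.app hbang hUd).cast (funext fun y => rfl) rfl rfl
      refine ⟨w1 + 1 + w2, happ.cast rfl rfl ?_, ?_⟩
      · show Ty.dist d.2.2.2 = _
        simp [h1, scaleL_one]
      · simp only [List.map_cons, List.map_nil, List.sum_cons, List.sum_nil, h1]
        linarith
  | .choice M₁ M₂ => by
      intro hC _ D hD hd
      obtain ⟨d1, d2, rfl, hf1, hf2⟩ := map_eq_pair' hD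
      have h11 : d1.1 = 1/2 := congrArg Prod.fst hf1
      have h12 : d1.2.1 = M₁ := congrArg Prod.snd hf1
      have h21 : d2.1 = 1/2 := congrArg Prod.fst hf2
      have h22 : d2.2.1 = M₂ := congrArg Prod.snd hf2
      have hda := hd d1 (by simp)
      have hdb := hd d2 (by simp)
      rw [h12] at hda
      rw [h22] at hdb
      refine ⟨d1.2.2.1/2 + d2.2.2.1/2 + 1,
        (GDeriv.choice hda hdb).cast (funext fun y => rfl) rfl ?_, ?_⟩
      · show Ty.dist _ = Ty.dist _
        simp [h11, h21]
      · simp only [List.map_cons, List.map_nil, List.sum_cons, List.sum_nil, h11, h21]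
        ring_nf
        linarith
  | .letin z (.val V) M₁ => by
      intro hC _ D hD hd
      obtain ⟨d, rfl, hfd⟩ := map_eq_singleton' hD
      have h1 : d.1 = 1 := congrArg Prod.fst hfd
      have h2 : d.2.1 = substT M₁ z V := congrArg Prod.snd hfd
      obtain ⟨hVc', hM₁⟩ := letin_closed_parts hC
      have hV : V.Closed := by
        rw [Tm.Closed, fvT] at hVc'
        exact hVc'
      have hdd := hd d (by simp)
      rw [h2] at hdd
      obtain ⟨A', w1, w2, hMd, hVd, he⟩ := anti_subst hV hdd M₁ rfl rfl
        (by intro A h; simp at h)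
      have hlet := (GDeriv.letin (Γ := emptyCtx) z [(1, A', emptyCtx, w1, d.2.2.2)]
        (by intro k hk
            simp only [List.mem_singleton] at hk
            subst hk
            exact ⟨rfl, by norm_num⟩)
        (by intro k hk
            simp only [List.mem_singleton] at hk
            rw [hk]
            exact hMd)
        (GDeriv.tval hVd)).cast (funext fun y => rfl)
        (by show 1 * w1 + 0 + w2 + 1 = w1 + w2 + 1; ring) rfl
      refine ⟨w1 + w2 + 1, hlet.cast rfl rfl ?_, ?_⟩
      · show Ty.dist _ = Ty.dist _
        simp [h1, scaleL_one]
      · simp only [List.map_cons, List.map_nil, List.sum_cons, List.sum_nil, h1]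
        linarith
  | .letin z (.app V U) M₁ =>
      expand_letin z (.app V U) M₁ rfl rfl (expand (.app V U))
  | .letin z (.choice N₁ N₂) M₁ =>
      expand_letin z (.choice N₁ N₂) M₁ rfl rfl (expand (.choice N₁ N₂))
  | .letin z (.letin y N₁ N₂) M₁ =>
      expand_letin z (.letin y N₁ N₂) M₁ rfl rfl (expand (.letin y N₁ N₂))

lemma normD_flatten (L : List DTy) : normD L.flatten = (L.map normD).sum := by
  induction L with
  | nil => rfl
  | cons a L ih => simp [normD_append, ih]

lemma gmain_val (k : ℕ) (V : Val) :
    ∃ w a, Tight a ∧ GDeriv emptyCtx w (.val V) (.dist a) ∧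
      normD a = evalP k (.val V) ∧ w ≥ etime k (.val V) := by
  refine ⟨0, [(1, [])], ?_, GDeriv.tval (empty_inter V), ?_, ?_⟩
  · intro p hp; simp at hp; rw [hp]
  · simp [normD, evalP_val]
  · simp [etime_val]

lemma gmain : ∀ (k : ℕ) (M : Tm), M.Closed →
    ∃ w a, Tight a ∧ GDeriv emptyCtx w M (.dist a) ∧
      normD a = evalP k M ∧ w ≥ etime k M := by
  intro k
  induction k with
  | zero =>
    intro M hM
    cases M with
    | val V => exact gmain_val 0 V
    | app V U =>
      exact ⟨0, [], by intro p hp; simp at hp, GDeriv.zero _,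
        by simp [normD, evalP_zero_nonval (Tm.app V U) rfl], by simp [etime]⟩
    | choice M₁ M₂ =>
      exact ⟨0, [], by intro p hp; simp at hp, GDeriv.zero _,
        by simp [normD, evalP_zero_nonval (Tm.choice M₁ M₂) rfl], by simp [etime]⟩
    | letin z N M₁ =>
      exact ⟨0, [], by intro p hp; simp at hp, GDeriv.zero _,
        by simp [normD, evalP_zero_nonval (Tm.letin z N M₁) rfl], by simp [etime]⟩
  | succ k ih =>
    intro M hM
    by_cases hval : M.isVal = true
    · obtain ⟨V, rfl⟩ : ∃ V, M = .val V := by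
        cases M with
        | val V => exact ⟨V, rfl⟩
        | app _ _ => simp [Tm.isVal] at hval
        | choice _ _ => simp [Tm.isVal] at hval
        | letin _ _ _ => simp [Tm.isVal] at hval
      exact gmain_val (k+1) V
    · rw [Bool.not_eq_true] at hval
      have hex : ∀ p ∈ stepL M, ∃ t : ℚ × DTy,
          Tight t.2 ∧ GDeriv emptyCtx t.1 p.2 (.dist t.2) ∧
          normD t.2 = evalP k p.2 ∧ t.1 ≥ etime k p.2 := by
        intro p hp
        obtain ⟨w, a, h1, h2, h3, h4⟩ := ih p.2 (stepL_closed M hM p hp)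
        exact ⟨(w, a), h1, h2, h3, h4⟩
      obtain ⟨l', hl1, hl2⟩ := list_skolem (stepL M) _ hex
      have hD : (l'.map fun e => (e.1.1, e.1.2, e.2.1, e.2.2)).map
          (fun d => (d.1, d.2.1)) = stepL M := by
        rw [List.map_map]
        exact hl1
      obtain ⟨w', hw'd, hw'ge⟩ := expand M hM hval
        (l'.map fun e => (e.1.1, e.1.2, e.2.1, e.2.2)) hD
        (by intro d hd
            simp only [List.mem_map] at hd
            obtain ⟨e, he, rfl⟩ := hd
            exact (hl2 e he).2.1)
      refine ⟨w', _, ?_, hw'd, ?_, ?_⟩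
      · -- tightness
        intro p hp
        obtain ⟨l, hl, hpl⟩ := List.mem_flatten.mp hp
        simp only [List.mem_map, List.map_map] at hl
        obtain ⟨e, he, rfl⟩ := hl
        show p.2 = []
        obtain ⟨q, hq, rfl⟩ := List.mem_map.mp hpl
        exact (hl2 e he).1 q hq
      · -- norm
        rw [normD_flatten, evalP_succ, ← hl1, List.map_map, List.map_map, List.map_map]
        apply congrArg List.sum
        apply List.map_congr_left
        intro e he
        show normD (scaleL e.1.1 e.2.2) = e.1.1 * evalP k e.1.2
        rw [normD_scaleL, (hl2 e he).2.2.1]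
      · -- weight
        have h1 : etime (k+1) M = 1 + ((stepL M).map fun p => p.1 * etime k p.2).sum :=
          etime_succ k M hval
        have h2 : ((stepL M).map fun p => p.1 * etime k p.2).sum
            ≤ (l'.map fun e => e.1.1 * e.2.1).sum := by
          rw [← hl1, List.map_map]
          apply List.sum_le_sum
          intro e he
          show e.1.1 * etime k e.1.2 ≤ e.1.1 * e.2.1
          have hpos : 0 < e.1.1 := (stepL_pos M _ (hl1 ▸ List.mem_map_of_mem he)).1
          exact mul_le_mul_of_nonneg_left (hl2 e he).2.2.2 (le_of_lt hpos)
        have h3 : ((l'.map fun e => (e.1.1, e.1.2, e.2.1, e.2.2)).map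
            fun d => d.1 * d.2.2.1).sum = (l'.map fun e => e.1.1 * e.2.1).sum := by
          rw [List.map_map]
          rfl
        rw [h3] at hw'ge
        rw [ge_iff_le, h1]
        linarith

/-- **Finitary Completeness**: for each `k` there is a tight derivation
`Π ⊳ ⊢_w M : 𝔞` with `‖𝔞‖ = eval_k(M)` and `w ≥ etime_k(M)`. -/
theorem finitary_completeness {M : Tm} (hM : M.Closed) (k : ℕ) :
    ∃ (w : ℚ) (a : DTy), Tight a ∧ Nonempty (Deriv emptyCtx w M (.dist a)) ∧
      normD a = evalP k M ∧ w ≥ etime k M := by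
  obtain ⟨w, a, h1, h2, h3, h4⟩ := gmain k M hM
  exact ⟨w, a, h1, h2.toDeriv, h3, h4⟩

end CbV
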